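/- arXiv:1305.6162 — 2 statements merged into one kernel-verified Lean document; each statement's English description precedes it below -/
import Mathlib

section
/- For all positive integers a, b, the maps Φ_{a,b} : V(a) ⊗ V(b) → V(a+b) and Φ^{a,b} : V(a+b) → V(a) ⊗ V(b) are homomorphisms of U_q(gl(1|1))-modules, commute with the bar involutions, and satisfy Φ_{a,b} ∘ Φ^{a,b} = [a+b choose a]·id_{V(a+b)}. -/
open scoped Classical

set_option maxHeartbeats 1000000
set_option synthInstance.maxHeartbeats 200000

noncomputable section

abbrev K : Type := RatFunc ℂ

noncomputable def q : K := RatFunc.X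

/-- The quantum integer `[k] = (q^k - q^{-k})/(q - q^{-1})`. -/
noncomputable def qnum (k : ℕ) : K := (q ^ k - q⁻¹ ^ k) / (q - q⁻¹)

/-- The quantum factorial `[k]! = [k][k-1]⋯[1]`. -/
noncomputable def qfact : ℕ → K
  | 0 => 1
  | k + 1 => qnum (k + 1) * qfact k

/-- The underlying vector space of `V(a_1) ⊗ ⋯ ⊗ V(a_l)`, with standard basis indexed by
sequences `η ∈ {0,1}^l`. -/
abbrev V (n : ℕ) : Type := (Fin n → Fin 2) → K

/-- The standard basis vector `v^a_η`. -/
noncomputable def eb {n : ℕ} (η : Fin n → Fin 2) : V n := fun γ => if γ = η then 1 else 0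

/-- The number of `1`s in `γ` strictly before position `i` (the Koszul sign exponent). -/
def onesBefore {n : ℕ} (γ : Fin n → Fin 2) (i : Fin n) : ℕ :=
  (Finset.univ.filter (fun k => k < i ∧ γ k = 1)).card

/-- The action of `E` on `V(a_1) ⊗ ⋯ ⊗ V(a_l)` (via the iterated comultiplication
`Δ(E) = E ⊗ K⁻¹ + 1 ⊗ E`, with the Koszul sign rule). -/
noncomputable def Eop (a : ℕ → ℕ) (n : ℕ) : Module.End K (V n) where
  toFun f := fun γ => ∑ i : Fin n,
    if γ i = 0 then
      ((-1 : K) ^ onesBefore γ i) * qnum (a i)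
        * q ^ (-((∑ j ∈ Finset.univ.filter (fun j => i < j), a j : ℕ) : ℤ))
        * f (Function.update γ i 1)
    else 0
  map_add' f g := by
    funext γ
    simp only [Pi.add_apply, ← Finset.sum_add_distrib]
    refine Finset.sum_congr rfl fun i _ => ?_
    split_ifs <;> ring
  map_smul' c f := by
    funext γ
    simp only [Pi.smul_apply, smul_eq_mul, RingHom.id_apply, Finset.mul_sum]
    refine Finset.sum_congr rfl fun i _ => ?_
    split_ifs <;> ring

/-- The action of `F` on `V(a_1) ⊗ ⋯ ⊗ V(a_l)` (via the iterated comultiplication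
`Δ(F) = F ⊗ 1 + K ⊗ F`, with the Koszul sign rule). -/
noncomputable def Fop (a : ℕ → ℕ) (n : ℕ) : Module.End K (V n) where
  toFun f := fun γ => ∑ i : Fin n,
    if γ i = 1 then
      ((-1 : K) ^ onesBefore γ i)
        * q ^ (∑ j ∈ Finset.univ.filter (fun j => j < i), a j)
        * f (Function.update γ i 0)
    else 0
  map_add' f g := by
    funext γ
    simp only [Pi.add_apply, ← Finset.sum_add_distrib]
    refine Finset.sum_congr rfl fun i _ => ?_
    split_ifs <;> ring
  map_smul' c f := by
    funext γ
    simp only [Pi.smul_apply, smul_eq_mul, RingHom.id_apply, Finset.mul_sum]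
    refine Finset.sum_congr rfl fun i _ => ?_
    split_ifs <;> ring

/-- The number of entries of `η` equal to `1` (the super degree of `v_η`). -/
def ones {m : ℕ} (η : Fin m → Fin 2) : ℕ := (Finset.univ.filter (fun i => η i = 1)).card

/-- The number of entries of `η` equal to `0`. -/
def zeros {m : ℕ} (η : Fin m → Fin 2) : ℕ := (Finset.univ.filter (fun i => η i = 0)).card

/-- The parity twist `x ↦ (-1)^{|x|}·x` (on homogeneous components). -/
noncomputable def twist {m : ℕ} (x : V m) : V m := fun η => (-1 : K) ^ ones η * x η

/-- The bar involution of `V(a_1) ⊗ ⋯ ⊗ V(a_m)`, defined inductively from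
`bar v^a_i = v^a_i` on each factor by `bar (w ⊗ w') = Θ'(bar w ⊗ bar w')` with
`Θ' = 1 + (q⁻¹ - q) E ⊗ F` (with the Koszul sign rule) and `bar q = q⁻¹`. -/
noncomputable def barV (a : ℕ → ℕ) : (m : ℕ) → V m → V m
  | 0, f => f
  | m + 1, f => fun γ =>
    if γ (Fin.last m) = 0 then
      barV a m (fun δ => f (Fin.snoc δ 0)) (fun i => γ i.castSucc)
    else
      barV a m (fun δ => f (Fin.snoc δ 1)) (fun i => γ i.castSucc)
        + (q⁻¹ - q) *
          Eop a m (twist (barV a m (fun δ => f (Fin.snoc δ 0)))) (fun i => γ i.castSucc)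

def s (n : ℕ) (i : Fin (n - 1)) : Equiv.Perm (Fin n) :=
  Equiv.swap ⟨(i : ℕ), by have := i.isLt; omega⟩ ⟨(i : ℕ) + 1, by have := i.isLt; omega⟩

def wordProd (n : ℕ) (l : List (Fin (n - 1))) : Equiv.Perm (Fin n) :=
  (l.map (s n)).prod

def len (n : ℕ) (w : Equiv.Perm (Fin n)) : ℕ :=
  sInf {k | ∃ l : List (Fin (n - 1)), l.length = k ∧ wordProd n l = w}

def bruhatLE (n : ℕ) (u w : Equiv.Perm (Fin n)) : Prop :=
  ∃ l : List (Fin (n - 1)), l.length = len n w ∧ wordProd n l = w ∧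
    ∃ t : List (Fin (n - 1)), t.Sublist l ∧ wordProd n t = u

def bruhatLT (n : ℕ) (u w : Equiv.Perm (Fin n)) : Prop :=
  bruhatLE n u w ∧ u ≠ w

/-- The parabolic subgroup of `S_n` generated by the simple transpositions indexed by `P`. -/
def parab (n : ℕ) (P : Finset (Fin (n - 1))) : Subgroup (Equiv.Perm (Fin n)) :=
  Subgroup.closure {σ | ∃ i ∈ P, σ = s n i}

/-- `w` is a shortest coset representative for `(S_k × S_{l-k}) \ S_l` (the parabolic
subgroup generated by all simple reflections except `s_k`). -/
def shortRep (l k : ℕ) (w : Equiv.Perm (Fin l)) : Prop :=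
  ∀ x ∈ parab l (Finset.univ.filter (fun i : Fin (l - 1) => (i : ℕ) + 1 ≠ k)),
    len l w ≤ len l (x * w)

/-- The minimal `{0,1}`-sequence `η_min = (0,…,0,1,…,1)` with `k` zeros. -/
def etaMin (l k : ℕ) : Fin l → Fin 2 := fun i => if (i : ℕ) < k then 0 else 1

/-- The partial order on the standard basis vectors of a weight space: within the weight
with `k` zeros, `η < γ` iff `η = η_min·u`, `γ = η_min·w` for shortest coset
representatives `u ≺ w` in the Bruhat order. -/
def seqLT (l k : ℕ) (η γ : Fin l → Fin 2) : Prop :=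
  ∃ u w : Equiv.Perm (Fin l), shortRep l k u ∧ shortRep l k w ∧ bruhatLT l u w ∧
    η = (fun i => etaMin l k (u i)) ∧ γ = (fun i => etaMin l k (w i))

/-- The bar involution of `V(a)`: the semilinear extension (with respect to the field
homomorphism `barK`, which implements `q ↦ q⁻¹`) of the map `barV` computing the bar
involution on the standard basis vectors. -/
noncomputable def barSemi (barK : K →+* K) (a : ℕ → ℕ) (l : ℕ) (f : V l) : V l :=
  barV a l (fun η => barK (f η))

/-- `v` is the canonical basis element `v^{◊a}_η` of `V(a)`: it is bar-invariant and
`v - v^a_η` is a `q·ℤ[q]`-linear combination of standard basis vectors strictly smaller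
than `v^a_η`. -/
def IsCanon (barK : K →+* K) (a : ℕ → ℕ) (l : ℕ) (η : Fin l → Fin 2) (v : V l) : Prop :=
  barSemi barK a l v = v ∧
  ∃ R : (Fin l → Fin 2) → Polynomial ℤ,
    (∀ γ, ¬ seqLT l (zeros η) γ η → R γ = 0) ∧
    v = eb η + ∑ γ : Fin l → Fin 2, (q * Polynomial.aeval q (R γ)) • eb γ
/-- The action of `q^h` for `h = c·h₁ + d·h₂` on `V(a_1) ⊗ ⋯ ⊗ V(a_l)`:
the basis vector `v^{a_i}_0` has weight `a_i ε₁` and `v^{a_i}_1` has weight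
`(a_i - 1) ε₁ + ε₂`. -/
noncomputable def Kop (a : ℕ → ℕ) (n : ℕ) (c d : ℤ) : Module.End K (V n) where
  toFun f := fun γ =>
    q ^ (∑ i : Fin n, (if γ i = 0 then c * (a i : ℤ) else c * ((a i : ℤ) - 1) + d)) * f γ
  map_add' f g := by
    funext γ
    simp only [Pi.add_apply]
    ring
  map_smul' c' f := by
    funext γ
    simp only [Pi.smul_apply, smul_eq_mul, RingHom.id_apply]
    ring

/-- The quantum binomial coefficient `[m choose j] = [m]!/([j]![m-j]!)`. -/
noncomputable def qbin (m j : ℕ) : K := qfact m / (qfact j * qfact (m - j))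

/-- The sequence `(a, b)`. -/
def pair (a b : ℕ) : ℕ → ℕ := fun j => if j = 0 then a else b

/-- The constant sequence `(c)`. -/
def single (c : ℕ) : ℕ → ℕ := fun _ => c

/-- The projection `Φ_{a,b} : V(a) ⊗ V(b) → V(a+b)`:
`v^a_1 ⊗ v^b_1 ↦ 0`, `v^a_1 ⊗ v^b_0 ↦ q^{-b}·[a+b-1 choose b]·v^{a+b}_1`,
`v^a_0 ⊗ v^b_1 ↦ [a+b-1 choose a]·v^{a+b}_1`, `v^a_0 ⊗ v^b_0 ↦ [a+b choose a]·v^{a+b}_0`. -/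
noncomputable def PhiDown (a b : ℕ) : V 2 → V 1 := fun x γ =>
  if γ 0 = 0 then qbin (a + b) a * x (fun _ => 0)
  else q ^ (-(b : ℤ)) * qbin (a + b - 1) b * x (fun j => if j = 0 then 1 else 0)
    + qbin (a + b - 1) a * x (fun j => if j = 0 then 0 else 1)

/-- The inclusion `Φ^{a,b} : V(a+b) → V(a) ⊗ V(b)`:
`v^{a+b}_1 ↦ v^a_1 ⊗ v^b_0 + q^a·v^a_0 ⊗ v^b_1`, `v^{a+b}_0 ↦ v^a_0 ⊗ v^b_0`. -/
noncomputable def PhiUp (a b : ℕ) : V 1 → V 2 := fun x γ =>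
  if γ = (fun _ => 0) then x (fun _ => 0)
  else if γ = (fun j => if j = 0 then 1 else 0) then x (fun _ => 1)
  else if γ = (fun j => if j = 0 then 0 else 1) then q ^ a * x (fun _ => 1)
  else 0

/-!
STATEMENT 13: For all positive integers `a, b`, the maps `Φ_{a,b} : V(a) ⊗ V(b) → V(a+b)`
and `Φ^{a,b} : V(a+b) → V(a) ⊗ V(b)` are homomorphisms of `U_q(gl(1|1))`-modules (i.e.
they commute with the actions of `E`, `F` and all `q^h`), commute with the bar
involutions, and satisfy `Φ_{a,b} ∘ Φ^{a,b} = [a+b choose a]·id_{V(a+b)}`.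
-/

lemma q_ne : q ≠ 0 := RatFunc.X_ne_zero

lemma qpow_sub_ne (k : ℕ) (hk : 0 < k) : q ^ k - q⁻¹ ^ k ≠ 0 := by
  intro h
  have hq : q ^ k ≠ 0 := pow_ne_zero _ q_ne
  have h2 : q ^ (2 * k) = 1 := by
    have heq : q ^ k = q⁻¹ ^ k := sub_eq_zero.mp h
    rw [two_mul, pow_add]
    nth_rewrite 2 [heq]
    rw [← mul_pow, mul_inv_cancel₀ q_ne, one_pow]
  have : (Polynomial.X : Polynomial ℂ) ^ (2 * k) = 1 := by
    apply RatFunc.algebraMap_injective ℂ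
    rw [map_pow, map_one, RatFunc.algebraMap_X]
    exact h2
  have := congrArg Polynomial.natDegree this
  simp [Polynomial.natDegree_X_pow] at this
  omega

lemma qden_ne : q - q⁻¹ ≠ 0 := by
  have := qpow_sub_ne 1 one_pos
  simpa using this

lemma qnum_ne (k : ℕ) (hk : 0 < k) : qnum k ≠ 0 :=
  div_ne_zero (qpow_sub_ne k hk) qden_ne

lemma qfact_ne : ∀ k, qfact k ≠ 0
  | 0 => one_ne_zero
  | k + 1 => mul_ne_zero (qnum_ne _ (Nat.succ_pos k)) (qfact_ne k)

lemma qden_mul_qnum (k : ℕ) : (q - q⁻¹) * qnum k = q ^ k - q⁻¹ ^ k := by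
  rw [qnum, mul_div_cancel₀ _ qden_ne]

lemma pascal_scalar (a b : ℕ) :
    q ^ (-(b : ℤ)) * qnum a + q ^ (a : ℕ) * qnum b = qnum (a + b) := by
  rw [zpow_neg, zpow_natCast, ← inv_pow, qnum, qnum, qnum, ← mul_div_assoc, ← mul_div_assoc,
    ← add_div]
  congr 1
  ring
lemma qbin_ne (m j : ℕ) : qbin m j ≠ 0 :=
  div_ne_zero (qfact_ne m) (mul_ne_zero (qfact_ne j) (qfact_ne _))

lemma L1 (a b : ℕ) (ha : 0 < a) (hb : 0 < b) :
    qnum (a + b) * qbin (a + b - 1) b = qnum a * qbin (a + b) a := by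
  obtain ⟨a', rfl⟩ : ∃ a', a = a' + 1 := ⟨a - 1, by omega⟩
  obtain ⟨b', rfl⟩ : ∃ b', b = b' + 1 := ⟨b - 1, by omega⟩
  have h1 : qnum (a' + 1) ≠ 0 := qnum_ne _ (Nat.succ_pos _)
  simp only [qbin]
  rw [show a' + 1 + (b' + 1) - 1 = a' + b' + 1 by omega,
    show a' + b' + 1 - (b' + 1) = a' by omega,
    show a' + 1 + (b' + 1) - (a' + 1) = b' + 1 by omega,
    show a' + 1 + (b' + 1) = (a' + b' + 1) + 1 by omega]
  rw [show qfact (a' + b' + 1 + 1) = qnum (a' + b' + 1 + 1) * qfact (a' + b' + 1) from rfl,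
    show qfact (a' + 1) = qnum (a' + 1) * qfact a' from rfl]
  rw [mul_div_assoc', mul_div_assoc',
    div_eq_div_iff (mul_ne_zero (qfact_ne _) (qfact_ne _))
      (mul_ne_zero (mul_ne_zero h1 (qfact_ne _)) (qfact_ne _))]
  ring

lemma L2 (a b : ℕ) (ha : 0 < a) (hb : 0 < b) :
    qnum (a + b) * qbin (a + b - 1) a = qnum b * qbin (a + b) a := by
  obtain ⟨a', rfl⟩ : ∃ a', a = a' + 1 := ⟨a - 1, by omega⟩
  obtain ⟨b', rfl⟩ : ∃ b', b = b' + 1 := ⟨b - 1, by omega⟩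
  have h1 : qnum (b' + 1) ≠ 0 := qnum_ne _ (Nat.succ_pos _)
  simp only [qbin]
  rw [show a' + 1 + (b' + 1) - 1 = a' + b' + 1 by omega,
    show a' + b' + 1 - (a' + 1) = b' by omega,
    show a' + 1 + (b' + 1) - (a' + 1) = b' + 1 by omega,
    show a' + 1 + (b' + 1) = (a' + b' + 1) + 1 by omega]
  rw [show qfact (a' + b' + 1 + 1) = qnum (a' + b' + 1 + 1) * qfact (a' + b' + 1) from rfl,
    show qfact (b' + 1) = qnum (b' + 1) * qfact b' from rfl]
  rw [mul_div_assoc', mul_div_assoc',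
    div_eq_div_iff (mul_ne_zero (qfact_ne _) (qfact_ne _))
      (mul_ne_zero (qfact_ne _) (mul_ne_zero h1 (qfact_ne _)))]
  ring

lemma L4 (a b : ℕ) (ha : 0 < a) (hb : 0 < b) :
    qnum b * qbin (a + b - 1) b = qnum a * qbin (a + b - 1) a := by
  have h1 := L1 a b ha hb
  have h2 := L2 a b ha hb
  apply mul_left_cancel₀ (qnum_ne (a + b) (by omega))
  linear_combination qnum b * h1 - qnum a * h2

lemma L3 (a b : ℕ) (ha : 0 < a) (hb : 0 < b) :
    q ^ (-(b : ℤ)) * qbin (a + b - 1) b + q ^ (a : ℕ) * qbin (a + b - 1) a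
      = qbin (a + b) a := by
  have h1 := L1 a b ha hb
  have h2 := L2 a b ha hb
  have h3 := pascal_scalar a b
  apply mul_left_cancel₀ (qnum_ne (a + b) (by omega))
  linear_combination q ^ (-(b : ℤ)) * h1 + q ^ (a : ℕ) * h2 + qbin (a + b) a * h3
section barKlemmas
variable (barK : K →+* K) (hbarKq : barK q = q⁻¹)

include hbarKq

lemma barK_inv : barK q⁻¹ = q := by
  rw [map_inv₀, hbarKq, inv_inv]

lemma barK_qnum (k : ℕ) : barK (qnum k) = qnum k := by
  have h' : q⁻¹ - q ≠ 0 := sub_ne_zero.mpr (Ne.symm (sub_ne_zero.mp qden_ne))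
  rw [qnum, map_div₀, map_sub, map_pow, map_pow, map_sub, hbarKq, barK_inv barK hbarKq,
    div_eq_div_iff h' qden_ne]
  ring

lemma barK_qfact (k : ℕ) : barK (qfact k) = qfact k := by
  induction k with
  | zero => simp [qfact]
  | succ n ih => rw [qfact, map_mul, barK_qnum barK hbarKq, ih]

lemma barK_qbin (m j : ℕ) : barK (qbin m j) = qbin m j := by
  rw [qbin, map_div₀, map_mul, barK_qfact barK hbarKq, barK_qfact barK hbarKq,
    barK_qfact barK hbarKq]

lemma barK_qpow (k : ℕ) : barK (q ^ k) = q⁻¹ ^ k := by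
  rw [map_pow, hbarKq]

lemma barK_qzpowneg (k : ℕ) : barK (q ^ (-(k : ℤ))) = q ^ (k : ℕ) := by
  rw [zpow_neg, zpow_natCast, map_inv₀, map_pow, hbarKq, ← inv_pow, inv_inv]

lemma barK_qzpow (k : ℤ) : barK (q ^ k) = q ^ (-k) := by
  rw [map_zpow₀, hbarKq, inv_zpow, zpow_neg]
end barKlemmas
def e00 : Fin 2 → Fin 2 := fun _ => 0
def e10 : Fin 2 → Fin 2 := fun j => if j = 0 then 1 else 0
def e01 : Fin 2 → Fin 2 := fun j => if j = 0 then 0 else 1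
def e11 : Fin 2 → Fin 2 := fun _ => 1
def c0 : Fin 1 → Fin 2 := fun _ => 0
def c1 : Fin 1 → Fin 2 := fun _ => 1

lemma Eop_apply (A : ℕ → ℕ) (n : ℕ) (x : V n) (γ : Fin n → Fin 2) :
    Eop A n x γ = ∑ i : Fin n,
      if γ i = 0 then
        ((-1 : K) ^ onesBefore γ i) * qnum (A i)
          * q ^ (-((∑ j ∈ Finset.univ.filter (fun j => i < j), A j : ℕ) : ℤ))
          * x (Function.update γ i 1)
      else 0 := rfl

lemma Fop_apply (A : ℕ → ℕ) (n : ℕ) (x : V n) (γ : Fin n → Fin 2) :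
    Fop A n x γ = ∑ i : Fin n,
      if γ i = 1 then
        ((-1 : K) ^ onesBefore γ i)
          * q ^ (∑ j ∈ Finset.univ.filter (fun j => j < i), A j)
          * x (Function.update γ i 0)
      else 0 := rfl

lemma Kop_apply (A : ℕ → ℕ) (n : ℕ) (c d : ℤ) (x : V n) (γ : Fin n → Fin 2) :
    Kop A n c d x γ =
      q ^ (∑ i : Fin n, (if γ i = 0 then c * (A i : ℤ) else c * ((A i : ℤ) - 1) + d)) * x γ :=
  rfl

lemma fin2cases (γ : Fin 2 → Fin 2) : γ = e00 ∨ γ = e10 ∨ γ = e01 ∨ γ = e11 := by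
  revert γ; decide

lemma fin1cases (γ : Fin 1 → Fin 2) : γ = c0 ∨ γ = c1 := by
  revert γ; decide

-- basic eval tests
example (A : ℕ → ℕ) (x : V 2) :
    Eop A 2 x e00 = qnum (A 0) * q ^ (-(A 1 : ℤ)) * x e10 + qnum (A 1) * x e01 := by
  rw [Eop_apply, Fin.sum_univ_two]
  rw [if_pos (show e00 0 = 0 from rfl), if_pos (show e00 1 = 0 from rfl)]
  rw [show Function.update e00 0 1 = e10 from by decide,
      show Function.update e00 1 1 = e01 from by decide,
      show onesBefore e00 0 = 0 from by decide,
      show onesBefore e00 1 = 0 from by decide,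
      show (Finset.univ.filter (fun j => (0 : Fin 2) < j)) = {1} from by decide,
      show (Finset.univ.filter (fun j => (1 : Fin 2) < j)) = (∅ : Finset (Fin 2)) from by decide]
  simp

section evals
variable (A : ℕ → ℕ)

lemma Eop2_e00 (x : V 2) :
    Eop A 2 x e00 = qnum (A 0) * q ^ (-(A 1 : ℤ)) * x e10 + qnum (A 1) * x e01 := by
  rw [Eop_apply, Fin.sum_univ_two]
  rw [if_pos (show e00 0 = 0 from rfl), if_pos (show e00 1 = 0 from rfl)]
  rw [show Function.update e00 0 1 = e10 from by decide,
      show Function.update e00 1 1 = e01 from by decide,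
      show onesBefore e00 0 = 0 from by decide,
      show onesBefore e00 1 = 0 from by decide,
      show (Finset.univ.filter (fun j => (0 : Fin 2) < j)) = {1} from by decide,
      show (Finset.univ.filter (fun j => (1 : Fin 2) < j)) = (∅ : Finset (Fin 2)) from by decide]
  simp

lemma Eop2_e10 (x : V 2) : Eop A 2 x e10 = -(qnum (A 1) * x e11) := by
  rw [Eop_apply, Fin.sum_univ_two]
  rw [if_neg (show ¬ e10 0 = 0 from by decide), if_pos (show e10 1 = 0 from rfl)]
  rw [show Function.update e10 1 1 = e11 from by decide,
      show onesBefore e10 1 = 1 from by decide,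
      show (Finset.univ.filter (fun j => (1 : Fin 2) < j)) = (∅ : Finset (Fin 2)) from by decide]
  simp

lemma Eop2_e01 (x : V 2) : Eop A 2 x e01 = qnum (A 0) * q ^ (-(A 1 : ℤ)) * x e11 := by
  rw [Eop_apply, Fin.sum_univ_two]
  rw [if_pos (show e01 0 = 0 from rfl), if_neg (show ¬ e01 1 = 0 from by decide)]
  rw [show Function.update e01 0 1 = e11 from by decide,
      show onesBefore e01 0 = 0 from by decide,
      show (Finset.univ.filter (fun j => (0 : Fin 2) < j)) = {1} from by decide]
  simp

lemma Eop2_e11 (x : V 2) : Eop A 2 x e11 = 0 := by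
  rw [Eop_apply, Fin.sum_univ_two]
  rw [if_neg (show ¬ e11 0 = 0 from by decide), if_neg (show ¬ e11 1 = 0 from by decide)]
  simp

lemma Fop2_e00 (x : V 2) : Fop A 2 x e00 = 0 := by
  rw [Fop_apply, Fin.sum_univ_two]
  rw [if_neg (show ¬ e00 0 = 1 from by decide), if_neg (show ¬ e00 1 = 1 from by decide)]
  simp

lemma Fop2_e10 (x : V 2) : Fop A 2 x e10 = x e00 := by
  rw [Fop_apply, Fin.sum_univ_two]
  rw [if_pos (show e10 0 = 1 from rfl), if_neg (show ¬ e10 1 = 1 from by decide)]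
  rw [show Function.update e10 0 0 = e00 from by decide,
      show onesBefore e10 0 = 0 from by decide,
      show (Finset.univ.filter (fun j => j < (0 : Fin 2))) = (∅ : Finset (Fin 2)) from by decide]
  simp

lemma Fop2_e01 (x : V 2) : Fop A 2 x e01 = q ^ (A 0) * x e00 := by
  rw [Fop_apply, Fin.sum_univ_two]
  rw [if_neg (show ¬ e01 0 = 1 from by decide), if_pos (show e01 1 = 1 from rfl)]
  rw [show Function.update e01 1 0 = e00 from by decide,
      show onesBefore e01 1 = 0 from by decide,
      show (Finset.univ.filter (fun j => j < (1 : Fin 2))) = {0} from by decide]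
  simp

lemma Fop2_e11 (x : V 2) : Fop A 2 x e11 = x e01 - q ^ (A 0) * x e10 := by
  rw [Fop_apply, Fin.sum_univ_two]
  rw [if_pos (show e11 0 = 1 from rfl), if_pos (show e11 1 = 1 from rfl)]
  rw [show Function.update e11 0 0 = e01 from by decide,
      show Function.update e11 1 0 = e10 from by decide,
      show onesBefore e11 0 = 0 from by decide,
      show onesBefore e11 1 = 1 from by decide,
      show (Finset.univ.filter (fun j => j < (0 : Fin 2))) = (∅ : Finset (Fin 2)) from by decide,
      show (Finset.univ.filter (fun j => j < (1 : Fin 2))) = {0} from by decide]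
  simp
  ring

lemma Kop2_e00 (c d : ℤ) (x : V 2) :
    Kop A 2 c d x e00 = q ^ (c * (A 0 : ℤ) + c * (A 1 : ℤ)) * x e00 := by
  rw [Kop_apply, Fin.sum_univ_two]
  rw [if_pos (show e00 0 = 0 from rfl), if_pos (show e00 1 = 0 from rfl)]
  norm_num

lemma Kop2_e10 (c d : ℤ) (x : V 2) :
    Kop A 2 c d x e10 = q ^ ((c * ((A 0 : ℤ) - 1) + d) + c * (A 1 : ℤ)) * x e10 := by
  rw [Kop_apply, Fin.sum_univ_two]
  rw [if_neg (show ¬ e10 0 = 0 from by decide), if_pos (show e10 1 = 0 from rfl)]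
  norm_num

lemma Kop2_e01 (c d : ℤ) (x : V 2) :
    Kop A 2 c d x e01 = q ^ (c * (A 0 : ℤ) + (c * ((A 1 : ℤ) - 1) + d)) * x e01 := by
  rw [Kop_apply, Fin.sum_univ_two]
  rw [if_pos (show e01 0 = 0 from rfl), if_neg (show ¬ e01 1 = 0 from by decide)]
  norm_num

lemma Kop2_e11 (c d : ℤ) (x : V 2) :
    Kop A 2 c d x e11 = q ^ ((c * ((A 0 : ℤ) - 1) + d) + (c * ((A 1 : ℤ) - 1) + d)) * x e11 := by
  rw [Kop_apply, Fin.sum_univ_two]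
  rw [if_neg (show ¬ e11 0 = 0 from by decide), if_neg (show ¬ e11 1 = 0 from by decide)]
  norm_num

lemma Eop1_c0 (x : V 1) : Eop A 1 x c0 = qnum (A 0) * x c1 := by
  rw [Eop_apply, Fin.sum_univ_one]
  rw [if_pos (show c0 0 = 0 from rfl)]
  rw [show Function.update c0 0 1 = c1 from by decide,
      show onesBefore c0 0 = 0 from by decide,
      show (Finset.univ.filter (fun j => (0 : Fin 1) < j)) = (∅ : Finset (Fin 1)) from by decide]
  simp

lemma Eop1_c1 (x : V 1) : Eop A 1 x c1 = 0 := by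
  rw [Eop_apply, Fin.sum_univ_one, if_neg (show ¬ c1 0 = 0 from by decide)]

lemma Fop1_c0 (x : V 1) : Fop A 1 x c0 = 0 := by
  rw [Fop_apply, Fin.sum_univ_one, if_neg (show ¬ c0 0 = 1 from by decide)]

lemma Fop1_c1 (x : V 1) : Fop A 1 x c1 = x c0 := by
  rw [Fop_apply, Fin.sum_univ_one, if_pos (show c1 0 = 1 from rfl)]
  rw [show Function.update c1 0 0 = c0 from by decide,
      show onesBefore c1 0 = 0 from by decide,
      show (Finset.univ.filter (fun j => j < (0 : Fin 1))) = (∅ : Finset (Fin 1)) from by decide]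
  simp

lemma Kop1_c0 (c d : ℤ) (x : V 1) : Kop A 1 c d x c0 = q ^ (c * (A 0 : ℤ)) * x c0 := by
  rw [Kop_apply, Fin.sum_univ_one, if_pos (show c0 0 = 0 from rfl)]
  norm_num

lemma Kop1_c1 (c d : ℤ) (x : V 1) :
    Kop A 1 c d x c1 = q ^ (c * ((A 0 : ℤ) - 1) + d) * x c1 := by
  rw [Kop_apply, Fin.sum_univ_one, if_neg (show ¬ c1 0 = 0 from by decide)]
  norm_num

end evals
section phev
variable (a b : ℕ)

lemma PhiDown_c0 (x : V 2) : PhiDown a b x c0 = qbin (a + b) a * x e00 := by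
  rw [PhiDown, if_pos (show c0 0 = 0 from rfl)]; rfl

lemma PhiDown_c1 (x : V 2) :
    PhiDown a b x c1 = q ^ (-(b : ℤ)) * qbin (a + b - 1) b * x e10
      + qbin (a + b - 1) a * x e01 := by
  rw [PhiDown, if_neg (show ¬ c1 0 = 0 from by decide)]; rfl

lemma PhiUp_e00 (x : V 1) : PhiUp a b x e00 = x c0 := by
  rw [PhiUp, if_pos (show e00 = (fun _ => 0) from rfl)]; rfl

lemma PhiUp_e10 (x : V 1) : PhiUp a b x e10 = x c1 := by
  rw [PhiUp, if_neg (show ¬ e10 = (fun _ => 0) from by decide),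
    if_pos (show e10 = (fun j => if j = 0 then 1 else 0) from rfl)]; rfl

lemma PhiUp_e01 (x : V 1) : PhiUp a b x e01 = q ^ a * x c1 := by
  rw [PhiUp, if_neg (show ¬ e01 = (fun _ => 0) from by decide),
    if_neg (show ¬ e01 = (fun j => if j = 0 then 1 else 0) from by decide),
    if_pos (show e01 = (fun j => if j = 0 then 0 else 1) from rfl)]; rfl

lemma PhiUp_e11 (x : V 1) : PhiUp a b x e11 = 0 := by
  rw [PhiUp, if_neg (show ¬ e11 = (fun _ => 0) from by decide),
    if_neg (show ¬ e11 = (fun j => if j = 0 then 1 else 0) from by decide),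
    if_neg (show ¬ e11 = (fun j => if j = 0 then 0 else 1) from by decide)]

end phev

section barev
variable (A : ℕ → ℕ)

lemma barV_succ (m : ℕ) (f : V (m + 1)) (γ : Fin (m + 1) → Fin 2) :
    barV A (m + 1) f γ =
      if γ (Fin.last m) = 0 then
        barV A m (fun δ => f (Fin.snoc δ 0)) (fun i => γ i.castSucc)
      else
        barV A m (fun δ => f (Fin.snoc δ 1)) (fun i => γ i.castSucc)
          + (q⁻¹ - q) *
            Eop A m (twist (barV A m (fun δ => f (Fin.snoc δ 0)))) (fun i => γ i.castSucc) := rfl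

lemma barV1 (f : V 1) (γ : Fin 1 → Fin 2) : barV A 1 f γ = f γ := by
  rcases fin1cases γ with h | h <;> subst h
  · rw [barV_succ, if_pos (show c0 (Fin.last 0) = 0 from rfl)]
    show f _ = f c0
    rw [show (Fin.snoc (fun i => c0 i.castSucc) 0 : Fin 1 → Fin 2) = c0 from by decide]
  · rw [barV_succ, if_neg (show ¬ c1 (Fin.last 0) = 0 from by decide)]
    show f _ + (q⁻¹ - q) * Eop A 0 _ _ = f c1
    rw [show (Fin.snoc (fun i => c1 i.castSucc) 1 : Fin 1 → Fin 2) = c1 from by decide]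
    rw [show Eop A 0 (twist (barV A 0 (fun δ => f (Fin.snoc δ 0)))) (fun i => c1 i.castSucc)
        = 0 from by rw [Eop_apply]; simp]
    ring

lemma barV2_e00 (f : V 2) : barV A 2 f e00 = f e00 := by
  rw [barV_succ, if_pos (show e00 (Fin.last 1) = 0 from rfl), barV1]
  rw [show (Fin.snoc (fun i => e00 i.castSucc) 0 : Fin 2 → Fin 2) = e00 from by decide]

lemma barV2_e10 (f : V 2) : barV A 2 f e10 = f e10 := by
  rw [barV_succ, if_pos (show e10 (Fin.last 1) = 0 from rfl), barV1]
  rw [show (Fin.snoc (fun i => e10 i.castSucc) 0 : Fin 2 → Fin 2) = e10 from by decide]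

lemma barV2_e11 (f : V 2) : barV A 2 f e11 = f e11 := by
  rw [barV_succ, if_neg (show ¬ e11 (Fin.last 1) = 0 from by decide), barV1]
  rw [show (Fin.snoc (fun i => e11 i.castSucc) 1 : Fin 2 → Fin 2) = e11 from by decide]
  rw [show (fun i => e11 i.castSucc) = c1 from by decide, Eop1_c1]
  ring

lemma barV2_e01 (f : V 2) :
    barV A 2 f e01 = f e01 - (q⁻¹ - q) * (qnum (A 0) * f e10) := by
  rw [barV_succ, if_neg (show ¬ e01 (Fin.last 1) = 0 from by decide), barV1]
  rw [show (Fin.snoc (fun i => e01 i.castSucc) 1 : Fin 2 → Fin 2) = e01 from by decide]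
  rw [show (fun i => e01 i.castSucc) = c0 from by decide, Eop1_c0]
  rw [show twist (barV A 1 (fun δ => f (Fin.snoc δ 0))) c1
      = -(barV A 1 (fun δ => f (Fin.snoc δ 0)) c1) from by
    rw [twist, show ones c1 = 1 from by decide]; ring]
  rw [barV1]
  rw [show (Fin.snoc c1 0 : Fin 2 → Fin 2) = e10 from by decide]
  ring

end barev

section barsemi
variable (A : ℕ → ℕ) (barK : K →+* K)

lemma barSemi1 (f : V 1) (γ : Fin 1 → Fin 2) : barSemi barK A 1 f γ = barK (f γ) := by
  rw [barSemi, barV1]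

lemma barSemi2_e00 (f : V 2) : barSemi barK A 2 f e00 = barK (f e00) := by
  rw [barSemi, barV2_e00]
lemma barSemi2_e10 (f : V 2) : barSemi barK A 2 f e10 = barK (f e10) := by
  rw [barSemi, barV2_e10]
lemma barSemi2_e11 (f : V 2) : barSemi barK A 2 f e11 = barK (f e11) := by
  rw [barSemi, barV2_e11]
lemma barSemi2_e01 (f : V 2) :
    barSemi barK A 2 f e01 = barK (f e01) - (q⁻¹ - q) * (qnum (A 0) * barK (f e10)) := by
  rw [barSemi, barV2_e01]

end barsemi
lemma zpow_neg_nat (k : ℕ) : q ^ (-(k : ℤ)) = q⁻¹ ^ k := by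
  rw [zpow_neg, zpow_natCast, inv_pow]
theorem statement13 (a b : ℕ) (ha : 0 < a) (hb : 0 < b)
    (barK : K →+* K) (hbarKq : barK q = q⁻¹)
    (hbarKc : ∀ z : ℂ, barK (algebraMap ℂ K z) = algebraMap ℂ K z)
 :
    -- Φ_{a,b} and Φ^{a,b} are U_q(gl(1|1))-module homomorphisms
    (∀ x : V 2, PhiDown a b (Eop (pair a b) 2 x) = Eop (single (a + b)) 1 (PhiDown a b x)) ∧
    (∀ x : V 2, PhiDown a b (Fop (pair a b) 2 x) = Fop (single (a + b)) 1 (PhiDown a b x)) ∧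
    (∀ (c d : ℤ) (x : V 2),
      PhiDown a b (Kop (pair a b) 2 c d x) = Kop (single (a + b)) 1 c d (PhiDown a b x)) ∧
    (∀ x : V 1, PhiUp a b (Eop (single (a + b)) 1 x) = Eop (pair a b) 2 (PhiUp a b x)) ∧
    (∀ x : V 1, PhiUp a b (Fop (single (a + b)) 1 x) = Fop (pair a b) 2 (PhiUp a b x)) ∧
    (∀ (c d : ℤ) (x : V 1),
      PhiUp a b (Kop (single (a + b)) 1 c d x) = Kop (pair a b) 2 c d (PhiUp a b x)) ∧
    -- Φ_{a,b} and Φ^{a,b} commute with the bar involutions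
    (∀ x : V 2,
      PhiDown a b (barSemi barK (pair a b) 2 x) = barSemi barK (single (a + b)) 1 (PhiDown a b x)) ∧
    (∀ x : V 1,
      PhiUp a b (barSemi barK (single (a + b)) 1 x) = barSemi barK (pair a b) 2 (PhiUp a b x)) ∧
    -- Φ_{a,b} ∘ Φ^{a,b} = [a+b choose a]·id
    (∀ x : V 1, PhiDown a b (PhiUp a b x) = qbin (a + b) a • x) := by
  have hab : (0:ℕ) < a + b := by omega
  have hp0 : pair a b 0 = a := rfl
  have hp1 : pair a b 1 = b := rfl
  have hs0 : single (a + b) 0 = a + b := rfl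
  refine ⟨?_, ?_, ?_, ?_, ?_, ?_, ?_, ?_, ?_⟩
  · -- PhiDown E
    intro x; funext γ
    rcases fin1cases γ with h | h <;> subst h
    · rw [PhiDown_c0, Eop2_e00, Eop1_c0, PhiDown_c1, hp0, hp1, hs0]
      linear_combination (-(q ^ (-(b : ℤ)) * x e10)) * L1 a b ha hb - x e01 * L2 a b ha hb
    · rw [PhiDown_c1, Eop2_e10, Eop2_e01, Eop1_c1, hp0, hp1]
      linear_combination (-(q ^ (-(b : ℤ)) * x e11)) * L4 a b ha hb
  · -- PhiDown F
    intro x; funext γ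
    rcases fin1cases γ with h | h <;> subst h
    · rw [PhiDown_c0, Fop2_e00, Fop1_c0]; ring
    · rw [PhiDown_c1, Fop2_e10, Fop2_e01, Fop1_c1, PhiDown_c0, hp0]
      linear_combination x e00 * L3 a b ha hb
  · -- PhiDown K
    intro c d x; funext γ
    rcases fin1cases γ with h | h <;> subst h
    · rw [PhiDown_c0, Kop2_e00, Kop1_c0, PhiDown_c0, hp0, hp1, hs0]
      rw [show c * ((a:ℤ)) + c * (b:ℤ) = c * (((a + b : ℕ) : ℤ)) by push_cast; ring]
      ring
    · rw [PhiDown_c1, Kop2_e10, Kop2_e01, Kop1_c1, PhiDown_c1, hp0, hp1, hs0]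
      rw [show c * ((a:ℤ) - 1) + d + c * (b:ℤ) = c * (((a + b : ℕ) : ℤ) - 1) + d by
        push_cast; ring]
      rw [show c * (a:ℤ) + (c * ((b:ℤ) - 1) + d) = c * (((a + b : ℕ) : ℤ) - 1) + d by
        push_cast; ring]
      ring
  · -- PhiUp E
    intro x; funext γ
    rcases fin2cases γ with h | h | h | h <;> subst h
    · rw [PhiUp_e00, Eop1_c0, Eop2_e00, PhiUp_e10, PhiUp_e01, hp0, hp1, hs0]
      linear_combination (-(x c1)) * pascal_scalar a b
    · rw [PhiUp_e10, Eop1_c1, Eop2_e10, PhiUp_e11]; ring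
    · rw [PhiUp_e01, Eop1_c1, Eop2_e01, PhiUp_e11]; ring
    · rw [PhiUp_e11, Eop2_e11]
  · -- PhiUp F
    intro x; funext γ
    rcases fin2cases γ with h | h | h | h <;> subst h
    · rw [PhiUp_e00, Fop1_c0, Fop2_e00]
    · rw [PhiUp_e10, Fop1_c1, Fop2_e10, PhiUp_e00]
    · rw [PhiUp_e01, Fop1_c1, Fop2_e01, PhiUp_e00, hp0]
    · rw [PhiUp_e11, Fop2_e11, PhiUp_e01, PhiUp_e10, hp0]; ring
  · -- PhiUp K
    intro c d x; funext γ
    rcases fin2cases γ with h | h | h | h <;> subst h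
    · rw [PhiUp_e00, Kop1_c0, Kop2_e00, PhiUp_e00, hp0, hp1, hs0]
      rw [show c * ((a:ℤ)) + c * (b:ℤ) = c * (((a + b : ℕ) : ℤ)) by push_cast; ring]
    · rw [PhiUp_e10, Kop1_c1, Kop2_e10, PhiUp_e10, hp0, hp1, hs0]
      rw [show c * ((a:ℤ) - 1) + d + c * (b:ℤ) = c * (((a + b : ℕ) : ℤ) - 1) + d by
        push_cast; ring]
    · rw [PhiUp_e01, Kop1_c1, Kop2_e01, PhiUp_e01, hp0, hp1, hs0]
      rw [show c * (a:ℤ) + (c * ((b:ℤ) - 1) + d) = c * (((a + b : ℕ) : ℤ) - 1) + d by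
        push_cast; ring]
      ring
    · rw [PhiUp_e11, Kop2_e11, PhiUp_e11]; ring
  · -- PhiDown bar
    intro x; funext γ
    rcases fin1cases γ with h | h <;> subst h
    · rw [PhiDown_c0, barSemi2_e00, barSemi1, PhiDown_c0, map_mul, barK_qbin barK hbarKq]
    · rw [PhiDown_c1, barSemi2_e10, barSemi2_e01, barSemi1, PhiDown_c1, map_add, map_mul,
        map_mul, map_mul, barK_qzpowneg barK hbarKq, barK_qbin barK hbarKq,
        barK_qbin barK hbarKq, hp0, zpow_neg_nat]
      linear_combination ((q⁻¹ - q) * barK (x e10)) * L4 a b ha hb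
        + (barK (x e10) * qbin (a + b - 1) b) * qden_mul_qnum b
  · -- PhiUp bar
    intro x; funext γ
    rcases fin2cases γ with h | h | h | h <;> subst h
    · rw [PhiUp_e00, barSemi1, barSemi2_e00, PhiUp_e00]
    · rw [PhiUp_e10, barSemi1, barSemi2_e10, PhiUp_e10]
    · rw [PhiUp_e01, barSemi1, barSemi2_e01, PhiUp_e01, PhiUp_e10, map_mul,
        barK_qpow barK hbarKq, hp0]
      linear_combination (-(barK (x c1))) * qden_mul_qnum a
    · rw [PhiUp_e11, barSemi2_e11, PhiUp_e11, map_zero]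
  · -- composition
    intro x; funext γ
    rcases fin1cases γ with h | h <;> subst h
    · rw [PhiDown_c0, PhiUp_e00, Pi.smul_apply, smul_eq_mul]
    · rw [PhiDown_c1, PhiUp_e10, PhiUp_e01, Pi.smul_apply, smul_eq_mul]
      linear_combination x c1 * L3 a b ha hb
end
end

section
/- For all positive integers a, b and all v ∈ V(a) ⊗ V(b), v' ∈ V(a+b), one has (Φ_{a,b}(v), v')_{(a+b)} = (v, q^{-ab}·Φ^{a,b}(v'))_{(a,b)}. -/
open scoped Classical

set_option maxHeartbeats 1000000
set_option synthInstance.maxHeartbeats 200000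

noncomputable section

/-- `β^η_j = a_j - η_j`. -/
def betaE (a : ℕ → ℕ) {m : ℕ} (η : Fin m → Fin 2) (i : Fin m) : ℕ := a i - (η i : ℕ)

/-- The diagonal coefficient
`q^{Σ_{i≠j} β^η_i β^η_j}·[β^η_1+⋯+β^η_m]!/([β^η_1]!⋯[β^η_m]!)` of the bilinear form
(the sum in the exponent is over the unordered pairs `i ≠ j`). -/
noncomputable def formCoeff (a : ℕ → ℕ) (m : ℕ) (η : Fin m → Fin 2) : K :=
  q ^ (∑ p ∈ (Finset.univ ×ˢ Finset.univ).filter (fun p : Fin m × Fin m => p.1 < p.2),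
        betaE a η p.1 * betaE a η p.2)
    * qfact (∑ i, betaE a η i) / ∏ i, qfact (betaE a η i)

/-- The symmetric bilinear form `(·,·)_a` on `V(a)`, for which the standard basis is
orthogonal with `(v^a_η, v^a_η)_a = formCoeff a m η`. -/
noncomputable def Bform (a : ℕ → ℕ) (m : ℕ) (f g : V m) : K :=
  ∑ η : Fin m → Fin 2, formCoeff a m η * f η * g η


section Aux

lemma q_ne_zero : (q : K) ≠ 0 := RatFunc.X_ne_zero

lemma q_pow_ne_one {n : ℕ} (hn : 0 < n) : (q : K) ^ n ≠ 1 := by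
  intro h
  have hinj := IsFractionRing.injective (Polynomial ℂ) K
  have hx : (q : K) = algebraMap (Polynomial ℂ) K Polynomial.X := (RatFunc.algebraMap_X).symm
  rw [hx, ← map_pow, show (1 : K) = algebraMap (Polynomial ℂ) K 1 from (map_one _).symm] at h
  have := hinj h
  have := congrArg Polynomial.natDegree this
  simp at this
  omega

lemma q_sub_inv_ne_zero : (q : K) - q⁻¹ ≠ 0 := by
  intro h
  have : q * q = 1 := by
    have h2 : (q : K) = q⁻¹ := sub_eq_zero.mp h
    nth_rewrite 2 [h2]
    exact mul_inv_cancel₀ q_ne_zero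
  exact q_pow_ne_one (n := 2) (by norm_num) (by rw [pow_two]; exact this)

lemma qnum_ne_zero {k : ℕ} (hk : 0 < k) : qnum k ≠ 0 := by
  apply div_ne_zero _ q_sub_inv_ne_zero
  intro h
  have h2 : (q : K) ^ k = q⁻¹ ^ k := sub_eq_zero.mp h
  have : (q : K) ^ (2 * k) = 1 := by
    rw [two_mul, pow_add]
    nth_rewrite 2 [h2]
    rw [← mul_pow, mul_inv_cancel₀ q_ne_zero, one_pow]
  exact q_pow_ne_one (by omega) this

lemma qfact_ne_zero (k : ℕ) : qfact k ≠ 0 := by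
  induction k with
  | zero => simp [qfact]
  | succ n ih => exact mul_ne_zero (qnum_ne_zero (Nat.succ_pos n)) ih

lemma sum_fin1 (f : (Fin 1 → Fin 2) → K) : ∑ η, f η = f (fun _ => 0) + f (fun _ => 1) := by
  rw [Fintype.sum_equiv (Equiv.funUnique (Fin 1) (Fin 2)) f (fun i => f (fun _ => i))
    (fun η => congrArg f (funext fun j => by rw [Subsingleton.elim j default]; rfl))]
  rw [Fin.sum_univ_two]

lemma sum_fin2 (f : (Fin 2 → Fin 2) → K) :
    ∑ η, f η = f (fun _ => 0) + f (fun j => if j = 0 then 0 else 1)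
      + f (fun j => if j = 0 then 1 else 0) + f (fun _ => 1) := by
  rw [Fintype.sum_equiv (piFinTwoEquiv (fun _ => Fin 2)) f (fun p => f ![p.1, p.2])
    (fun η => congrArg f (funext fun j => by fin_cases j <;> rfl))]
  rw [Fintype.sum_prod_type, Fin.sum_univ_two, Fin.sum_univ_two, Fin.sum_univ_two]
  have e00 : ((fun _ => 0) : Fin 2 → Fin 2) = ![0, 0] := by funext j; fin_cases j <;> simp
  have e01 : ((fun j => if j = 0 then 0 else 1) : Fin 2 → Fin 2) = ![0, 1] := by
    funext j; fin_cases j <;> simp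
  have e10 : ((fun j => if j = 0 then 1 else 0) : Fin 2 → Fin 2) = ![1, 0] := by
    funext j; fin_cases j <;> simp
  have e11 : ((fun _ => 1) : Fin 2 → Fin 2) = ![1, 1] := by funext j; fin_cases j <;> simp
  rw [e00, e01, e10, e11]; ring

lemma formCoeff_one (c : ℕ → ℕ) (η : Fin 1 → Fin 2) : formCoeff c 1 η = 1 := by
  unfold formCoeff
  have hfil : ((Finset.univ ×ˢ Finset.univ).filter
      (fun p : Fin 1 × Fin 1 => p.1 < p.2)) = ∅ := by decide
  rw [hfil]
  simp [Fin.sum_univ_one, Fin.prod_univ_one, div_self (qfact_ne_zero _)]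

lemma formCoeff_two (c : ℕ → ℕ) (η : Fin 2 → Fin 2) :
    formCoeff c 2 η = q ^ (betaE c η 0 * betaE c η 1)
      * qfact (betaE c η 0 + betaE c η 1) / (qfact (betaE c η 0) * qfact (betaE c η 1)) := by
  unfold formCoeff
  have hfil : ((Finset.univ ×ˢ Finset.univ).filter
      (fun p : Fin 2 × Fin 2 => p.1 < p.2)) = {((0 : Fin 2), (1 : Fin 2))} := by decide
  rw [hfil, Finset.sum_singleton, Fin.sum_univ_two, Fin.prod_univ_two]

lemma helper2 (a b : ℕ) (F D : K) (hq : q ≠ 0) (hD : D ≠ 0) :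
    q ^ ((a + 1) * b) * F / D * ((q ^ ((a + 1) * (b + 1)))⁻¹ * q ^ (a + 1)) = F / D := by
  field_simp
  ring

lemma helper3 (a b : ℕ) (F D E : K) (hq : q ≠ 0) (hD : D ≠ 0) (hE : E ≠ 0) :
    (q ^ (b + 1))⁻¹ * (F / (D * E)) = q ^ (a * (b + 1)) * F / (E * D) * (q ^ ((a + 1) * (b + 1)))⁻¹ := by
  field_simp
  ring

end Aux

/-!
STATEMENT 14: For all positive integers `a, b` and all `v ∈ V(a) ⊗ V(b)`, `v' ∈ V(a+b)`,
one has `(Φ_{a,b}(v), v')_{(a+b)} = (v, q^{-ab}·Φ^{a,b}(v'))_{(a,b)}`.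
-/

theorem statement14 (a b : ℕ) (ha : 0 < a) (hb : 0 < b) (v : V 2) (v' : V 1) :
    Bform (single (a + b)) 1 (PhiDown a b v) v'
      = Bform (pair a b) 2 v (q ^ (-((a * b : ℕ) : ℤ)) • PhiUp a b v') := by
  obtain ⟨a, rfl⟩ : ∃ a', a = a' + 1 := ⟨a - 1, by omega⟩
  obtain ⟨b, rfl⟩ : ∃ b', b = b' + 1 := ⟨b - 1, by omega⟩
  rw [Bform, Bform, sum_fin1, sum_fin2, formCoeff_one, formCoeff_one,
    formCoeff_two, formCoeff_two, formCoeff_two, formCoeff_two]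
  have h1 : ((fun _ => 0) : Fin 2 → Fin 2) ≠ (fun j => if j = 0 then 1 else 0) := by decide
  have h2 : ((fun _ => 0) : Fin 2 → Fin 2) ≠ (fun j => if j = 0 then 0 else 1) := by decide
  have h3 : ((fun j => if j = 0 then 0 else 1) : Fin 2 → Fin 2) ≠ (fun _ => 0) := by decide
  have h4 : ((fun j => if j = 0 then 0 else 1) : Fin 2 → Fin 2)
      ≠ (fun j => if j = 0 then 1 else 0) := by decide
  have h5 : ((fun j => if j = 0 then 1 else 0) : Fin 2 → Fin 2) ≠ (fun _ => 0) := by decide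
  have h6 : ((fun _ => 1) : Fin 2 → Fin 2) ≠ (fun _ => 0) := by decide
  have h7 : ((fun _ => 1) : Fin 2 → Fin 2) ≠ (fun j => if j = 0 then 1 else 0) := by decide
  have h8 : ((fun _ => 1) : Fin 2 → Fin 2) ≠ (fun j => if j = 0 then 0 else 1) := by decide
  simp only [PhiDown, PhiUp, Pi.smul_apply, smul_eq_mul, betaE, pair, single,
    if_pos rfl, if_neg h1, if_neg h2, if_neg h3, if_neg h4, if_neg h5, if_neg h6,
    if_neg h7, if_neg h8]
  norm_num [qbin]
  have hn1 : a + 1 + b - (b + 1) = a := by omega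
  have hn2 : a + (b + 1) = a + 1 + b := by omega
  have hz1 : (q : K) ^ (-1 + -(b : ℤ)) = (q ^ (b + 1))⁻¹ := by
    rw [show (-1 + -(b : ℤ)) = -(((b + 1 : ℕ)) : ℤ) by push_cast; ring, zpow_neg, zpow_natCast]
  have hz2 : (q : K) ^ (((a : ℤ) + 1) * ((b : ℤ) + 1)) = q ^ ((a + 1) * (b + 1)) := by
    rw [show ((a : ℤ) + 1) * ((b : ℤ) + 1) = (((a + 1) * (b + 1) : ℕ) : ℤ) by push_cast; ring,
      zpow_natCast]
  rw [hn1, hn2, hz1, hz2]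
  have hq := q_ne_zero
  have hf := qfact_ne_zero
  have hqp : ∀ n : ℕ, (q : K) ^ n ≠ 0 := fun n => pow_ne_zero n q_ne_zero
  have c1 : q ^ ((a + 1) * (b + 1)) * qfact (a + 1 + (b + 1)) / (qfact (a + 1) * qfact (b + 1))
      * (q ^ ((a + 1) * (b + 1)))⁻¹
      = qfact (a + 1 + (b + 1)) / (qfact (a + 1) * qfact (b + 1)) := by
    field_simp
  have c2 : q ^ ((a + 1) * b) * qfact (a + 1 + b) / (qfact (a + 1) * qfact b)
      * ((q ^ ((a + 1) * (b + 1)))⁻¹ * q ^ (a + 1))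
      = qfact (a + 1 + b) / (qfact (a + 1) * qfact b) :=
    helper2 a b _ _ hq (mul_ne_zero (hf _) (hf _))
  have c3 : (q ^ (b + 1))⁻¹ * (qfact (a + 1 + b) / (qfact (b + 1) * qfact a))
      = q ^ (a * (b + 1)) * qfact (a + 1 + b) / (qfact a * qfact (b + 1))
        * (q ^ ((a + 1) * (b + 1)))⁻¹ :=
    helper3 a b _ _ _ hq (hf _) (hf _)
  linear_combination (-(v (fun _ => 0) * v' (fun _ => 0))) * c1
    - (v (fun j => if j = 0 then 0 else 1) * v' (fun _ => 1)) * c2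
    + (v (fun j => if j = 0 then 1 else 0) * v' (fun _ => 1)) * c3
end
end
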